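/- Let X be a Hilbert space, A, B nonempty closed convex subsets, v = P_{cl(B-A)}(0) the displacement vector, E = {a ∈ A : dist(a,B) = dist(A,B)} and F = {b ∈ B : dist(b,A) = dist(A,B)}, both nonempty. Then ‖v‖ = dist(A,B) and E + v = F. -/

import Mathlib

open Pointwise

/-- `p` is the metric projection of `x` onto the set `C`. -/
def IsProjPt {X : Type*} [NormedAddCommGroup X] (C : Set X) (x p : X) : Prop :=
  p ∈ C ∧ ∀ y ∈ C, dist x p ≤ dist x y

private lemma le_infDist' {X : Type*} [MetricSpace X] {s : Set X} {x : X} {c : ℝ}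
    (hs : s.Nonempty) (h : ∀ y ∈ s, c ≤ dist x y) : c ≤ Metric.infDist x s := by
  have : Nonempty s := hs.to_subtype
  rw [Metric.infDist_eq_iInf]
  exact le_ciInf fun y => h y y.2

theorem stmt6 {X : Type*} [NormedAddCommGroup X] [InnerProductSpace ℝ X] [CompleteSpace X]
    (A B : Set X) (hAne : A.Nonempty) (hBne : B.Nonempty)
    (hAc : IsClosed A) (hBc : IsClosed B) (hAconv : Convex ℝ A) (hBconv : Convex ℝ B)
    (v : X) (hv : IsProjPt (closure (B - A)) 0 v)
    (E F : Set X)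
    (hE : E = {a ∈ A | Metric.infDist a B = ⨅ a' : A, Metric.infDist (a' : X) B})
    (hF : F = {b ∈ B | Metric.infDist b A = ⨅ a' : A, Metric.infDist (a' : X) B})
    (hEne : E.Nonempty) (hFne : F.Nonempty) :
    ‖v‖ = (⨅ a' : A, Metric.infDist (a' : X) B) ∧ (· + v) '' E = F := by
  obtain ⟨hvD, hvmin⟩ := hv
  set D := closure (B - A) with hD
  set d := ⨅ a' : A, Metric.infDist (a' : X) B with hd
  have hDconv : Convex ℝ D := (hBconv.sub hAconv).closure
  have hBA_ne : (B - A).Nonempty := hBne.sub hAne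
  have hDne : D.Nonempty := hBA_ne.closure
  have : Nonempty A := hAne.to_subtype
  have hbdd : BddBelow (Set.range fun a' : A => Metric.infDist (a' : X) B) := by
    refine ⟨0, ?_⟩; rintro x ⟨a, rfl⟩; exact Metric.infDist_nonneg
  -- d ≤ infDist a B for a ∈ A
  have hd_le_inf : ∀ a ∈ A, d ≤ Metric.infDist a B := fun a ha =>
    ciInf_le hbdd (⟨a, ha⟩ : A)
  -- v achieves the iInf over D
  have hviInf : ‖(0 : X) - v‖ = ⨅ w : D, ‖(0 : X) - (w : X)‖ := by
    have : Nonempty D := hDne.to_subtype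
    apply le_antisymm
    · exact le_ciInf fun w => by simpa [dist_eq_norm] using hvmin w w.2
    · exact ciInf_le ⟨0, by rintro x ⟨w, rfl⟩; positivity⟩ (⟨v, hvD⟩ : D)
  -- uniqueness of minimizer
  have huniq : ∀ w ∈ D, ‖(0 : X) - w‖ = (⨅ z : D, ‖(0 : X) - (z : X)‖) → w = v := by
    intro w hwD hw
    have h1 := (norm_eq_iInf_iff_real_inner_le_zero hDconv hvD).mp hviInf w hwD
    have h2 := (norm_eq_iInf_iff_real_inner_le_zero hDconv hwD).mp hw v hvD
    have key : ‖w - v‖ ^ 2 ≤ 0 := by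
      have e : (inner ℝ ((0 : X) - v) (w - v) : ℝ) + (inner ℝ ((0 : X) - w) (v - w) : ℝ) = ‖w - v‖ ^ 2 := by
        simp only [zero_sub, inner_neg_left, inner_sub_right, ← real_inner_self_eq_norm_sq,
          inner_sub_left]
        rw [real_inner_comm w v]
        ring
      linarith
    have : ‖w - v‖ = 0 := le_antisymm (by nlinarith [norm_nonneg (w - v)]) (norm_nonneg _)
    have := norm_sub_eq_zero_iff.mp this
    exact this
  -- nearest point projection onto a closed convex set
  have hproj : ∀ (K : Set X), K.Nonempty → IsClosed K → Convex ℝ K →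
      ∀ u : X, ∃ p ∈ K, ‖u - p‖ = Metric.infDist u K := by
    intro K hKne hKc hKconv u
    obtain ⟨p, hpK, hp⟩ := exists_norm_eq_iInf_of_complete_convex hKne hKc.isComplete hKconv u
    refine ⟨p, hpK, ?_⟩
    rw [hp, Metric.infDist_eq_iInf]
    exact iInf_congr fun y => (dist_eq_norm u y).symm
  -- ‖v‖ = d
  have hnorm : ‖v‖ = d := by
    apply le_antisymm
    · obtain ⟨a0, ha0⟩ := hEne
      rw [hE] at ha0
      obtain ⟨ha0A, ha0d⟩ := ha0
      rw [← ha0d]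
      apply le_infDist' hBne
      intro y hy
      have hmem : y - a0 ∈ D := subset_closure (Set.sub_mem_sub hy ha0A)
      have := hvmin (y - a0) hmem
      calc ‖v‖ = dist (0 : X) v := by rw [dist_eq_norm, zero_sub, norm_neg]
        _ ≤ dist (0 : X) (y - a0) := this
        _ = ‖y - a0‖ := by rw [dist_eq_norm, zero_sub, norm_neg]
        _ = ‖a0 - y‖ := (norm_sub_rev _ _)
        _ = dist a0 y := (dist_eq_norm _ _).symm
    · have h1 : d ≤ Metric.infDist (0 : X) (B - A) := by
        apply le_infDist' hBA_ne
        rintro y ⟨b, hb, a, ha, rfl⟩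
        calc d ≤ Metric.infDist a B := hd_le_inf a ha
          _ ≤ dist a b := Metric.infDist_le_dist_of_mem hb
          _ = ‖a - b‖ := dist_eq_norm _ _
          _ = ‖b - a‖ := norm_sub_rev _ _
          _ = dist (0 : X) (b - a) := by rw [dist_eq_norm, zero_sub, norm_neg]
      calc d ≤ Metric.infDist (0 : X) (B - A) := h1
        _ = Metric.infDist (0 : X) D := Metric.infDist_closure.symm
        _ ≤ dist (0 : X) v := Metric.infDist_le_dist_of_mem hvD
        _ = ‖v‖ := by rw [dist_eq_norm, zero_sub, norm_neg]
  refine ⟨hnorm, ?_⟩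
  ext x
  simp only [Set.mem_image]
  constructor
  · rintro ⟨a, haE, rfl⟩
    rw [hE] at haE
    obtain ⟨haA, had⟩ := haE
    obtain ⟨b, hbB, hba⟩ := hproj B hBne hBc hBconv a
    have hbav : b - a = v := by
      apply huniq (b - a) (subset_closure (Set.sub_mem_sub hbB haA))
      rw [← hviInf]
      simp only [zero_sub, norm_neg]
      rw [norm_sub_rev b a, hba, had, ← hnorm]
    have hxb : a + v = b := by rw [← hbav]; abel
    rw [hF, hxb]
    refine ⟨hbB, le_antisymm ?_ ?_⟩
    · calc Metric.infDist b A ≤ dist b a := Metric.infDist_le_dist_of_mem haA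
        _ = ‖b - a‖ := dist_eq_norm _ _
        _ = ‖v‖ := by rw [hbav]
        _ = d := hnorm
    · apply le_infDist' hAne
      intro y hy
      calc d ≤ Metric.infDist y B := hd_le_inf y hy
        _ ≤ dist y b := Metric.infDist_le_dist_of_mem hbB
        _ = dist b y := dist_comm _ _
  · intro hxF
    rw [hF] at hxF
    obtain ⟨hxB, hxd⟩ := hxF
    obtain ⟨a, haA, hax⟩ := hproj A hAne hAc hAconv x
    have hxav : x - a = v := by
      apply huniq (x - a) (subset_closure (Set.sub_mem_sub hxB haA))
      rw [← hviInf]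
      simp only [zero_sub, norm_neg]
      rw [hax, hxd, ← hnorm]
    refine ⟨a, ?_, by rw [← hxav]; abel⟩
    rw [hE]
    refine ⟨haA, le_antisymm ?_ (hd_le_inf a haA)⟩
    calc Metric.infDist a B ≤ dist a x := Metric.infDist_le_dist_of_mem hxB
      _ = ‖x - a‖ := by rw [dist_comm, dist_eq_norm]
      _ = ‖v‖ := by rw [hxav]
      _ = d := hnorm
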